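/- Fix a set A of nonnegative integers with |A| ≥ 2, with m = max(A) and m' = max(A \ {m}), and fix a real δ > 0. For each integer b ≥ m, let Y_b be a random variable with P(Y_b = i) = C(b,i)/Σ_{t∈A} C(b,t) for i ∈ A, and let μ_b = E[Y_b]. Then there exist constants c_1, c_2 > 0 and an integer b_0 such that for all b ≥ b_0, c_1·b^{m'−m} ≤ E[|Y_b − μ_b|^{2+δ}] ≤ c_2·b^{m'−m}. -/

import Mathlib

open MeasureTheory ProbabilityTheory

set_option maxHeartbeats 1600000 in
/-- Asymptotics of the `(2+δ)`-th centered absolute moment of the number of summands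
from a bin of size `b` with allowed counts `A` (`|A| ≥ 2`, `m = max A`,
`m' = max (A \ {m})`): as `b → ∞`, `E[|Y_b − μ_b|^{2+δ}] = Θ(b^{m'−m})`. -/
theorem absolute_moment_asymptotics (A : Finset ℕ) (hcard : 2 ≤ A.card)
    (m m' : ℕ) (hm : IsGreatest (A : Set ℕ) m)
    (hm' : IsGreatest ((A.erase m : Finset ℕ) : Set ℕ) m')
    (δ : ℝ) (hδ : 0 < δ)
    (Ω : ℕ → Type*) [∀ b, MeasureSpace (Ω b)]
    [∀ b, IsProbabilityMeasure (ℙ : Measure (Ω b))]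
    (Y : ∀ b, Ω b → ℝ) (hY : ∀ b, Measurable (Y b))
    (hP : ∀ b, m ≤ b → ∀ i ∈ A, ℙ {ω | Y b ω = (i : ℝ)} =
      ENNReal.ofReal ((b.choose i : ℝ) / ∑ t ∈ A, (b.choose t : ℝ))) :
    ∃ c₁ c₂ : ℝ, 0 < c₁ ∧ 0 < c₂ ∧ ∃ b₀ : ℕ, ∀ b : ℕ, b₀ ≤ b → m ≤ b →
      c₁ * (b : ℝ) ^ ((m' : ℤ) - (m : ℤ)) ≤
          (∫ ω, |Y b ω - ∫ ω', Y b ω' ∂ℙ| ^ (2 + δ) ∂ℙ) ∧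
        (∫ ω, |Y b ω - ∫ ω', Y b ω' ∂ℙ| ^ (2 + δ) ∂ℙ) ≤
          c₂ * (b : ℝ) ^ ((m' : ℤ) - (m : ℤ)) := by
  classical
  have hmA : m ∈ A := hm.1
  have hm'E : m' ∈ A.erase m := hm'.1
  have hm'A : m' ∈ A := Finset.mem_of_mem_erase hm'E
  have hm'lt : m' < m :=
    lt_of_le_of_ne (hm.2 hm'A) (Finset.ne_of_mem_erase hm'E)
  have hm1 : 1 ≤ m := by omega
  have hcard0 : (0:ℝ) < A.card := by exact_mod_cast lt_of_lt_of_le (by norm_num) hcard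
  set S : ℕ → ℝ := fun b => ∑ t ∈ A, (b.choose t : ℝ) with hSdef
  have hSpos : ∀ b, m ≤ b → 0 < S b := by
    intro b hb
    refine Finset.sum_pos (fun t ht => ?_) ⟨m, hmA⟩
    exact_mod_cast Nat.choose_pos ((hm.2 ht).trans hb)
  have hpnn : ∀ b, m ≤ b → ∀ i : ℕ, 0 ≤ (b.choose i : ℝ) / S b := by
    intro b hb i
    exact div_nonneg (by positivity) (hSpos b hb).le
  have hsum1 : ∀ b, m ≤ b → ∑ i ∈ A, (b.choose i : ℝ) / S b = 1 := by
    intro b hb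
    rw [← Finset.sum_div]
    exact div_self (hSpos b hb).ne'
  -- key integral formula
  have hint : ∀ b, m ≤ b → ∀ g : ℝ → ℝ,
      ∫ ω, g (Y b ω) ∂ℙ = ∑ i ∈ A, g i * ((b.choose i : ℝ) / S b) := by
    intro b hb g
    set E : ℕ → Set (Ω b) := fun i => {ω | Y b ω = (i : ℝ)} with hEdef
    have hEm : ∀ i : ℕ, MeasurableSet (E i) := fun i => hY b (measurableSet_singleton _)
    have hdisj : (A : Set ℕ).PairwiseDisjoint E := by
      intro i _ j _ hij
      refine Set.disjoint_left.2 fun ω h1 h2 => hij ?_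
      exact Nat.cast_injective ((h1 : Y b ω = (i:ℝ)).symm.trans (h2 : Y b ω = (j:ℝ)))
    have hPE : ∀ i ∈ A, ℙ (E i) = ENNReal.ofReal ((b.choose i : ℝ) / S b) := hP b hb
    have hU : ℙ (⋃ i ∈ A, E i) = 1 := by
      rw [measure_biUnion_finset hdisj (fun i _ => hEm i), Finset.sum_congr rfl hPE,
        ← ENNReal.ofReal_sum_of_nonneg (fun i _ => hpnn b hb i), hsum1 b hb,
        ENNReal.ofReal_one]
    have hae : ∀ᵐ ω ∂(ℙ : Measure (Ω b)), ω ∈ ⋃ i ∈ A, E i := by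
      rw [ae_iff]
      have hc : {ω : Ω b | ¬ ω ∈ ⋃ i ∈ A, E i} = (⋃ i ∈ A, E i)ᶜ := rfl
      rw [hc, prob_compl_eq_zero_iff (Finset.measurableSet_biUnion A fun i _ => hEm i)]
      exact hU
    have haeeq : (fun ω => g (Y b ω)) =ᵐ[(ℙ : Measure (Ω b))]
        (fun ω => ∑ i ∈ A, (E i).indicator (fun _ => g i) ω) := by
      filter_upwards [hae] with ω hω
      obtain ⟨i, hiA, hYi⟩ := Set.mem_iUnion₂.1 hω
      have hYi' : Y b ω = (i : ℝ) := hYi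
      rw [hYi', Finset.sum_eq_single_of_mem i hiA]
      · rw [Set.indicator_of_mem hYi]
      · intro j hj hji
        refine Set.indicator_of_notMem (fun hωj => ?_) _
        exact hji (Nat.cast_injective ((hYi'.symm.trans (hωj : Y b ω = (j:ℝ)))) ).symm
    rw [integral_congr_ae haeeq, integral_finset_sum _
      (fun (i : ℕ) (_ : i ∈ A) => (integrable_const (g i)).indicator (hEm i))]
    refine Finset.sum_congr rfl fun i hi => ?_
    rw [integral_indicator_const _ (hEm i), measureReal_def, hPE i hi,
      ENNReal.toReal_ofReal (hpnn b hb i), smul_eq_mul, mul_comm]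
  -- constants
  set F : ℝ := 2 ^ m * (m.factorial : ℝ) with hFdef
  have hF1 : (1:ℝ) ≤ F := by
    have h1 : (1:ℝ) ≤ 2 ^ m := one_le_pow₀ (by norm_num)
    have h2 : (1:ℝ) ≤ (m.factorial : ℝ) := by exact_mod_cast m.factorial_pos
    nlinarith
  have hF0 : (0:ℝ) < F := lt_of_lt_of_le one_pos hF1
  set K : ℝ := m * A.card * F with hKdef
  have hK0 : (0:ℝ) < K := by
    have hmpos : (0:ℝ) < m := by exact_mod_cast hm1
    positivity
  have hc₁ : (0:ℝ) < (1/2 : ℝ) ^ (2+δ) / (F * A.card) :=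
    div_pos (Real.rpow_pos_of_pos (by norm_num) _) (mul_pos hF0 hcard0)
  have hc₂ : (0:ℝ) < K ^ (2+δ) + A.card * F * (m:ℝ) ^ (2+δ) := by
    have h1 : (0:ℝ) < K ^ (2+δ) := Real.rpow_pos_of_pos hK0 _
    have h2 : (0:ℝ) < (m:ℝ) ^ (2+δ) :=
      Real.rpow_pos_of_pos (by exact_mod_cast hm1 : (0:ℝ) < m) _
    nlinarith [mul_pos hcard0 hF0]
  refine ⟨(1/2 : ℝ) ^ (2+δ) / (F * A.card), K ^ (2+δ) + A.card * F * (m:ℝ) ^ (2+δ),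
    hc₁, hc₂, max (2*m + 1) ⌈2*K⌉₊, ?_⟩
  intro b hb₀ hmb
  have hb2m : 2*m ≤ b := by have := le_trans (le_max_left _ _) hb₀; omega
  have hb1 : 1 ≤ b := by have := le_trans (le_max_left _ _) hb₀; omega
  have hb1R : (1:ℝ) ≤ (b:ℝ) := by exact_mod_cast hb1
  have hb0R : (0:ℝ) < (b:ℝ) := lt_of_lt_of_le one_pos hb1R
  have hb2mR : 2*(m:ℝ) ≤ (b:ℝ) := by exact_mod_cast hb2m
  have hbK : 2*K ≤ (b:ℝ) := by
    have h1 : (⌈2*K⌉₊ : ℝ) ≤ b := by exact_mod_cast le_trans (le_max_right _ _) hb₀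
    exact le_trans (Nat.le_ceil _) h1
  set x : ℝ := (b : ℝ) ^ ((m' : ℤ) - (m : ℤ)) with hxdef
  have hx0 : 0 < x := zpow_pos hb0R _
  have hxinv : x ≤ ((b:ℝ))⁻¹ := by
    have h1 : (b:ℝ) ^ ((m' : ℤ) - (m : ℤ)) ≤ (b:ℝ) ^ (-1 : ℤ) :=
      zpow_le_zpow_right₀ hb1R (by omega)
    simpa using h1
  have hx1 : x ≤ 1 := le_trans hxinv (by
    rw [inv_le_one_iff₀]; right; exact hb1R)
  -- binomial bounds
  have hcl : ∀ i : ℕ, (b.choose i : ℝ) ≤ (b:ℝ) ^ i := by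
    intro i; exact_mod_cast Nat.choose_le_pow b i
  have hcg : ∀ k : ℕ, k ≤ m → (b:ℝ) ^ k / F ≤ (b.choose k : ℝ) := by
    intro k hk
    have hfle : (2:ℝ) ^ k * (k.factorial : ℝ) ≤ F := by
      rw [hFdef]
      have h1 : (2:ℝ) ^ k ≤ 2 ^ m := pow_le_pow_right₀ (by norm_num) hk
      have h2 : (k.factorial : ℝ) ≤ (m.factorial : ℝ) := by
        exact_mod_cast Nat.factorial_le hk
      have h3 : (0:ℝ) < (k.factorial : ℝ) := by positivity
      nlinarith [pow_pos (show (0:ℝ) < 2 by norm_num) k]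
    have hstep : (b:ℝ) ^ k / F ≤ ((b:ℝ)/2) ^ k / (k.factorial : ℝ) := by
      rw [div_pow, div_div]
      exact div_le_div_of_nonneg_left (by positivity) (by positivity) hfle
    refine le_trans hstep (le_trans ?_ (Nat.pow_le_choose (α := ℝ) k b))
    have hbase : (b:ℝ)/2 ≤ ((b + 1 - k : ℕ) : ℝ) := by
      have h1 : ((b + 1 - k : ℕ) : ℝ) = (b:ℝ) + 1 - k := by
        have hk' : k ≤ b + 1 := by omega
        push_cast [Nat.cast_sub hk']
        ring
      rw [h1]
      have h3 : (k:ℝ) ≤ (m:ℝ) := by exact_mod_cast hk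
      linarith
    gcongr
  have hS_ge : (b:ℝ) ^ m / F ≤ S b :=
    le_trans (hcg m le_rfl) (Finset.single_le_sum (f := fun t => (b.choose t : ℝ)) (fun t _ => by positivity) hmA)
  have hS_le : S b ≤ A.card * (b:ℝ) ^ m := by
    calc S b ≤ ∑ _t ∈ A, (b:ℝ)^m := by
          refine Finset.sum_le_sum fun t ht => le_trans (hcl t) ?_
          exact pow_le_pow_right₀ hb1R (hm.2 ht)
      _ = A.card * (b:ℝ)^m := by rw [Finset.sum_const, nsmul_eq_mul]
  have hSpos' : 0 < S b := hSpos b hmb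
  have hbm0 : (0:ℝ) < (b:ℝ)^m := by positivity
  -- probability upper bound for non-maximal indices
  have hp_le : ∀ i ∈ A.erase m, (b.choose i : ℝ) / S b ≤ F * x := by
    intro i hi
    have him' : i ≤ m' := hm'.2 hi
    have h1 : (b.choose i : ℝ) / S b ≤ (b:ℝ)^i / ((b:ℝ)^m / F) :=
      div_le_div₀ (by positivity) (hcl i) (by positivity) hS_ge
    refine le_trans h1 ?_
    rw [div_div_eq_mul_div, mul_comm, mul_div_assoc]
    gcongr
    rw [hxdef]
    calc (b:ℝ)^i / (b:ℝ)^m = (b:ℝ) ^ ((i:ℤ) - (m:ℤ)) := by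
          rw [zpow_sub₀ hb0R.ne', zpow_natCast, zpow_natCast]
      _ ≤ (b:ℝ) ^ ((m':ℤ) - (m:ℤ)) := zpow_le_zpow_right₀ hb1R (by omega)
  -- probability lower bound for m'
  have hp_m' : x / (F * A.card) ≤ (b.choose m' : ℝ) / S b := by
    have h1 : (b:ℝ)^m' / F / (A.card * (b:ℝ)^m) ≤ (b.choose m' : ℝ) / S b :=
      div_le_div₀ (by positivity) (hcg m' hm'lt.le) hSpos' hS_le
    refine le_trans (le_of_eq ?_) h1
    rw [hxdef]
    rw [zpow_sub₀ hb0R.ne', zpow_natCast, zpow_natCast]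
    field_simp
  -- the mean
  set μb : ℝ := ∫ ω', Y b ω' ∂(ℙ : Measure (Ω b)) with hμdef
  have hμ_eq : μb = ∑ i ∈ A, (i:ℝ) * ((b.choose i : ℝ) / S b) := by
    rw [hμdef]; exact hint b hmb (fun t => t)
  have hμ0 : 0 ≤ μb := by
    rw [hμ_eq]
    exact Finset.sum_nonneg fun i _ => mul_nonneg (by positivity) (hpnn b hmb i)
  have hμm : μb ≤ m := by
    rw [hμ_eq]
    calc ∑ i ∈ A, (i:ℝ) * ((b.choose i : ℝ) / S b)
        ≤ ∑ i ∈ A, (m:ℝ) * ((b.choose i : ℝ) / S b) := by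
          refine Finset.sum_le_sum fun i hi => ?_
          exact mul_le_mul_of_nonneg_right (by exact_mod_cast hm.2 hi) (hpnn b hmb i)
      _ = m := by rw [← Finset.mul_sum, hsum1 b hmb, mul_one]
  have hgap : (m:ℝ) - μb ≤ K * x := by
    have h1 : (m:ℝ) - μb = ∑ i ∈ A, ((m:ℝ) - i) * ((b.choose i : ℝ) / S b) := by
      simp only [sub_mul, Finset.sum_sub_distrib, ← Finset.mul_sum, hsum1 b hmb,
        mul_one, hμ_eq]
    have h2 : ∑ i ∈ A, ((m:ℝ) - i) * ((b.choose i : ℝ) / S b)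
        = ∑ i ∈ A.erase m, ((m:ℝ) - i) * ((b.choose i : ℝ) / S b) := by
      rw [← Finset.add_sum_erase A _ hmA]
      simp
    have h3 : ∑ i ∈ A.erase m, ((m:ℝ) - i) * ((b.choose i : ℝ) / S b)
        ≤ ∑ _i ∈ A.erase m, (m:ℝ) * (F * x) := by
      refine Finset.sum_le_sum fun i hi => ?_
      refine mul_le_mul ?_ (hp_le i hi) (hpnn b hmb i) (by positivity)
      have : (0:ℝ) ≤ (i:ℝ) := by positivity
      linarith
    have h4 : ∑ _i ∈ A.erase m, (m:ℝ) * (F * x) ≤ A.card * ((m:ℝ) * (F * x)) := by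
      rw [Finset.sum_const, nsmul_eq_mul]
      have hle : ((A.erase m).card : ℝ) ≤ A.card := by
        exact_mod_cast Finset.card_le_card (Finset.erase_subset m A)
      have hnn : (0:ℝ) ≤ (m:ℝ) * (F * x) := by positivity
      nlinarith
    rw [h1, h2]
    refine le_trans h3 (le_trans h4 (le_of_eq ?_))
    rw [hKdef]; ring
  have hgap0 : 0 ≤ (m:ℝ) - μb := by linarith
  have hgap_half : (m:ℝ) - μb ≤ 1/2 := by
    have h1 : K * x ≤ K * (b:ℝ)⁻¹ := mul_le_mul_of_nonneg_left hxinv hK0.le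
    have h2 : K * (b:ℝ)⁻¹ ≤ 1/2 := by
      rw [mul_inv_le_iff₀ hb0R]
      linarith
    linarith
  -- the moment
  have hM : (∫ ω, |Y b ω - μb| ^ (2 + δ) ∂ℙ)
      = ∑ i ∈ A, |(i:ℝ) - μb| ^ (2+δ) * ((b.choose i : ℝ) / S b) :=
    hint b hmb (fun t => |t - μb| ^ (2+δ))
  rw [hM]
  constructor
  · -- lower bound
    have hterm : (1/2:ℝ) ^ (2+δ) * (x / (F * A.card))
        ≤ |(m':ℝ) - μb| ^ (2+δ) * ((b.choose m' : ℝ) / S b) := by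
      have habs : (1/2:ℝ) ≤ |(m':ℝ) - μb| := by
        have h1 : (m':ℝ) + 1 ≤ m := by exact_mod_cast hm'lt
        have h2 : μb - m' ≥ 1/2 := by linarith
        rw [abs_sub_comm]
        exact le_trans h2 (le_abs_self _)
      refine mul_le_mul ?_ hp_m' (by positivity) (by positivity)
      exact Real.rpow_le_rpow (by norm_num) habs (by linarith)
    refine le_trans (le_of_eq ?_) (le_trans hterm
      (Finset.single_le_sum (f := fun (i : ℕ) => |(i:ℝ) - μb| ^ (2+δ) * ((b.choose i : ℝ) / S b)) (fun i _ => mul_nonneg (by positivity) (hpnn b hmb i)) hm'A))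
    rw [hxdef]; ring
  · -- upper bound
    have hsplit : ∑ i ∈ A, |(i:ℝ) - μb| ^ (2+δ) * ((b.choose i : ℝ) / S b)
        = |(m:ℝ) - μb| ^ (2+δ) * ((b.choose m : ℝ) / S b)
          + ∑ i ∈ A.erase m, |(i:ℝ) - μb| ^ (2+δ) * ((b.choose i : ℝ) / S b) := by
      rw [← Finset.add_sum_erase A _ hmA]
    have hpm1 : (b.choose m : ℝ) / S b ≤ 1 := by
      rw [div_le_one hSpos']
      exact Finset.single_le_sum (f := fun t => (b.choose t : ℝ)) (fun t _ => by positivity) hmA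
    have hterm_m : |(m:ℝ) - μb| ^ (2+δ) * ((b.choose m : ℝ) / S b) ≤ K ^ (2+δ) * x := by
      have habs : |(m:ℝ) - μb| ≤ K * x := by
        rw [abs_of_nonneg hgap0]; exact hgap
      have h1 : |(m:ℝ) - μb| ^ (2+δ) ≤ (K * x) ^ (2+δ) :=
        Real.rpow_le_rpow (abs_nonneg _) habs (by linarith)
      have h2 : (K * x) ^ (2+δ) = K ^ (2+δ) * x ^ (2+δ) :=
        Real.mul_rpow hK0.le hx0.le
      have h3 : x ^ (2+δ) ≤ x ^ (1:ℝ) :=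
        Real.rpow_le_rpow_of_exponent_ge hx0 hx1 (by linarith)
      have h4 : x ^ (1:ℝ) = x := Real.rpow_one x
      calc |(m:ℝ) - μb| ^ (2+δ) * ((b.choose m : ℝ) / S b)
          ≤ (K * x) ^ (2+δ) * 1 := by
            refine mul_le_mul h1 hpm1 (hpnn b hmb m) (by positivity)
        _ = K ^ (2+δ) * x ^ (2+δ) := by rw [mul_one, h2]
        _ ≤ K ^ (2+δ) * x := by
            refine mul_le_mul_of_nonneg_left ?_ (Real.rpow_nonneg hK0.le _)
            exact le_trans h3 (le_of_eq h4)
    have hterm_rest : ∑ i ∈ A.erase m, |(i:ℝ) - μb| ^ (2+δ) * ((b.choose i : ℝ) / S b)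
        ≤ (A.card * F * (m:ℝ) ^ (2+δ)) * x := by
      have hstep : ∀ i ∈ A.erase m, |(i:ℝ) - μb| ^ (2+δ) * ((b.choose i : ℝ) / S b)
          ≤ (m:ℝ) ^ (2+δ) * (F * x) := by
        intro i hi
        have hiA : i ∈ A := Finset.mem_of_mem_erase hi
        have him : (i:ℝ) ≤ m := by exact_mod_cast hm.2 hiA
        have habs : |(i:ℝ) - μb| ≤ (m:ℝ) := by
          rw [abs_le]
          constructor
          · have : (0:ℝ) ≤ (i:ℝ) := by positivity
            linarith
          · have : (0:ℝ) ≤ μb := hμ0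
            linarith
        refine mul_le_mul ?_ (hp_le i hi) (hpnn b hmb i) (by positivity)
        exact Real.rpow_le_rpow (abs_nonneg _) habs (by linarith)
      calc ∑ i ∈ A.erase m, |(i:ℝ) - μb| ^ (2+δ) * ((b.choose i : ℝ) / S b)
          ≤ ∑ _i ∈ A.erase m, (m:ℝ) ^ (2+δ) * (F * x) := Finset.sum_le_sum hstep
        _ = (A.erase m).card * ((m:ℝ) ^ (2+δ) * (F * x)) := by
            rw [Finset.sum_const, nsmul_eq_mul]
        _ ≤ A.card * ((m:ℝ) ^ (2+δ) * (F * x)) := by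
            have hle : ((A.erase m).card : ℝ) ≤ A.card := by
              exact_mod_cast Finset.card_le_card (Finset.erase_subset m A)
            have hnn : (0:ℝ) ≤ (m:ℝ) ^ (2+δ) * (F * x) := by positivity
            nlinarith
        _ = (A.card * F * (m:ℝ) ^ (2+δ)) * x := by ring
    rw [hsplit]
    calc |(m:ℝ) - μb| ^ (2+δ) * ((b.choose m : ℝ) / S b)
          + ∑ i ∈ A.erase m, |(i:ℝ) - μb| ^ (2+δ) * ((b.choose i : ℝ) / S b)
        ≤ K ^ (2+δ) * x + (A.card * F * (m:ℝ) ^ (2+δ)) * x :=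
          add_le_add hterm_m hterm_rest
      _ = (K ^ (2+δ) + A.card * F * (m:ℝ) ^ (2+δ)) * x := by ring
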